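/- For all integers N ≥ 1 and l with 0 ≤ l ≤ N, one has Σ_{n=1}^{N-1} sin²(n l π/N) / sin⁴(n π/N) = ( l²(N−l)² + 2 l (N−l) ) / 3. -/

import Mathlib

open Real Finset

lemma cos_sum_range (N l : ℕ) (h1 : 1 ≤ l) (h2 : l < N) :
    ∑ n ∈ Finset.range N, Real.cos (2 * Real.pi * l * n / N) = 0 := by
  have hNpos : (0:ℝ) < N := by exact_mod_cast Nat.lt_of_lt_of_le (Nat.lt_of_lt_of_le Nat.zero_lt_one h1) (le_of_lt h2)
  have hN0 : (N:ℝ) ≠ 0 := ne_of_gt hNpos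
  have hpi : (0:ℝ) < π := Real.pi_pos
  set θ : ℝ := 2 * Real.pi * l / N with hθ
  set z : ℂ := Complex.exp (θ * Complex.I) with hz
  have hzn : ∀ n : ℕ, z ^ n = Complex.exp ((n * θ : ℝ) * Complex.I) := by
    intro n
    rw [hz, ← Complex.exp_nat_mul]
    push_cast
    ring_nf
  have hzne : z ≠ 1 := by
    intro h
    rw [hz, Complex.exp_eq_one_iff] at h
    obtain ⟨k, hk⟩ := h
    have hI : (θ : ℂ) = k * (2 * π) := mul_right_cancel₀ Complex.I_ne_zero (by rw [hk]; ring)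
    have hR : θ = k * (2 * π) := by exact_mod_cast hI
    have hlk : (l : ℝ) = k * N := by
      rw [hθ, div_eq_iff hN0] at hR
      have h3 : (2*π)*((l:ℝ) - k*N) = 0 := by linear_combination hR
      rcases mul_eq_zero.mp h3 with h | h
      · linarith
      · linarith
    have hk0 : (0:ℝ) < (k:ℝ) := by
      nlinarith [show (0:ℝ) < (l:ℝ) by exact_mod_cast h1]
    have hk1 : (1:ℤ) ≤ k := by exact_mod_cast hk0
    have : (N:ℝ) ≤ (l:ℝ) := by
      have : (1:ℝ) ≤ (k:ℝ) := by exact_mod_cast hk1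
      nlinarith
    have : N ≤ l := by exact_mod_cast this
    omega
  have hzN : z ^ N = 1 := by
    rw [hzn]
    have hNθ : (N:ℝ) * θ = (l:ℝ) * (2 * π) := by rw [hθ]; field_simp
    have : (((N:ℝ) * θ : ℝ) : ℂ) * Complex.I = (l:ℤ) * (2 * ↑π * Complex.I) := by
      rw [hNθ]; push_cast; ring
    rw [this, Complex.exp_int_mul_two_pi_mul_I]
  have hsum : ∑ n ∈ Finset.range N, z ^ n = 0 := by
    rw [geom_sum_eq hzne, hzN]
    simp
  have : (∑ n ∈ Finset.range N, z ^ n).re = 0 := by rw [hsum]; simp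
  rw [Complex.re_sum] at this
  rw [← this]
  apply Finset.sum_congr rfl
  intro n _
  rw [hzn, Complex.exp_ofReal_mul_I_re]
  congr 1
  rw [hθ]; ring

lemma cos_sum_Icc (N l : ℕ) (h1 : 1 ≤ l) (h2 : l < N) :
    ∑ n ∈ Finset.Icc 1 (N-1), Real.cos (2 * Real.pi * l * n / N) = -1 := by
  have hset : Finset.range N = insert 0 (Finset.Icc 1 (N-1)) := by
    ext m; simp only [Finset.mem_range, Finset.mem_insert, Finset.mem_Icc]; omega
  have h := cos_sum_range N l h1 h2
  rw [hset, Finset.sum_insert (by simp)] at h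
  simp only [Nat.cast_zero, mul_zero, zero_div, Real.cos_zero] at h
  linarith

lemma sin_ne (N n : ℕ) (hn : n ∈ Finset.Icc 1 (N-1)) : Real.sin (n * Real.pi / N) ≠ 0 := by
  simp only [Finset.mem_Icc] at hn
  have hN : 1 ≤ N := by omega
  have hNpos : (0:ℝ) < N := by exact_mod_cast hN
  have hpi := Real.pi_pos
  have h1 : (0:ℝ) < n * Real.pi / N := by
    have : (0:ℝ) < (n:ℝ) := by exact_mod_cast hn.1
    positivity
  have h2 : (n:ℝ) * Real.pi / N < Real.pi := by
    have : (n:ℝ) < N := by exact_mod_cast (by omega : n < N)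
    rw [div_lt_iff₀ hNpos]
    nlinarith
  exact ne_of_gt (Real.sin_pos_of_pos_of_lt_pi h1 h2)

lemma trig_key (c a : ℝ) :
    Real.sin ((c+1)*a)^2 + Real.sin ((c-1)*a)^2 - 2 * Real.sin (c*a)^2
      = 2 * Real.sin a ^2 * Real.cos (2*(c*a)) := by
  rw [show (c+1)*a = c*a + a by ring, show (c-1)*a = c*a - a by ring,
    Real.sin_add, Real.sin_sub, Real.cos_two_mul]
  have h1 := Real.sin_sq_add_cos_sq a
  have h2 := Real.sin_sq_add_cos_sq (c*a)
  nlinarith [h1, h2]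

lemma T2_eq (N : ℕ) (hN : 1 ≤ N) (l : ℕ) (hl : l ≤ N) :
    ∑ n ∈ Finset.Icc 1 (N-1), Real.sin (n*l*Real.pi/N)^2 / Real.sin (n*Real.pi/N)^2
      = l * ((N:ℝ) - l) := by
  revert hl
  induction l using Nat.twoStepInduction with
  | zero => intro _; simp
  | one =>
    intro _
    have key : ∀ n ∈ Finset.Icc 1 (N-1),
        Real.sin (n*(1:ℕ)*Real.pi/N)^2 / Real.sin (n*Real.pi/N)^2 = 1 := by
      intro n hn
      rw [Nat.cast_one, mul_one]
      exact div_self (pow_ne_zero 2 (sin_ne N n hn))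
    rw [Finset.sum_congr rfl key, Finset.sum_const, Nat.card_Icc]
    have h1 : N - 1 + 1 - 1 = N - 1 := by omega
    rw [h1]
    simp only [nsmul_eq_mul, mul_one, Nat.cast_one, one_mul]
    rw [Nat.cast_sub hN, Nat.cast_one]
  | more l ih1 ih2 =>
    intro hl
    have key : ∀ n ∈ Finset.Icc 1 (N-1),
        Real.sin (n*(l+2:ℕ)*Real.pi/N)^2 / Real.sin (n*Real.pi/N)^2
          = 2 * (Real.sin (n*(l+1:ℕ)*Real.pi/N)^2 / Real.sin (n*Real.pi/N)^2)
            - Real.sin (n*(l:ℕ)*Real.pi/N)^2 / Real.sin (n*Real.pi/N)^2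
            + 2 * Real.cos (2*Real.pi*(l+1:ℕ)*n/N) := by
      intro n hn
      have hs := sin_ne N n hn
      set a : ℝ := (n:ℝ)*Real.pi/N with ha
      have ht := trig_key ((l:ℝ)+1) a
      rw [show ((l:ℝ)+1-1) = (l:ℝ) by ring] at ht
      have e1 : (n:ℝ)*((l+2:ℕ):ℝ)*Real.pi/N = (((l:ℝ)+1)+1)*a := by
        rw [ha]; push_cast; ring
      have e2 : (n:ℝ)*((l+1:ℕ):ℝ)*Real.pi/N = ((l:ℝ)+1)*a := by
        rw [ha]; push_cast; ring
      have e3 : (n:ℝ)*((l:ℕ):ℝ)*Real.pi/N = (l:ℝ)*a := by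
        rw [ha]; push_cast; ring
      have e4 : 2*Real.pi*((l+1:ℕ):ℝ)*(n:ℝ)/N = 2*(((l:ℝ)+1)*a) := by
        rw [ha]; push_cast; ring
      rw [e1, e2, e3, e4]
      generalize hC : Real.cos (2*(((l:ℝ)+1)*a)) = C at ht ⊢
      field_simp
      linear_combination ht
    rw [Finset.sum_congr rfl key]
    rw [Finset.sum_add_distrib, Finset.sum_sub_distrib, ← Finset.mul_sum, ← Finset.mul_sum]
    rw [ih1 (by omega), ih2 (by omega), cos_sum_Icc N (l+1) (by omega) (by omega)]
    push_cast
    ring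

lemma sum_id_real (N : ℕ) : ∑ l ∈ Finset.range N, (l:ℝ) = N*((N:ℝ)-1)/2 := by
  induction N with
  | zero => simp
  | succ n ih => rw [Finset.sum_range_succ, ih]; push_cast; ring

lemma sum_sq_real (N : ℕ) : ∑ l ∈ Finset.range N, (l:ℝ)^2 = N*((N:ℝ)-1)*(2*N-1)/6 := by
  induction N with
  | zero => simp
  | succ n ih => rw [Finset.sum_range_succ, ih]; push_cast; ring

lemma C_eq (N : ℕ) (hN : 1 ≤ N) :
    ∑ n ∈ Finset.Icc 1 (N-1), 1 / Real.sin (n*Real.pi/N)^2 = ((N:ℝ)^2 - 1)/3 := by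
  have hNpos : (0:ℝ) < N := by exact_mod_cast hN
  -- inner sum of sin² over l
  have inner : ∀ n ∈ Finset.Icc 1 (N-1),
      ∑ l ∈ Finset.range N, Real.sin (n*l*Real.pi/N)^2 = N/2 := by
    intro n hn
    simp only [Finset.mem_Icc] at hn
    have hc := cos_sum_range N n hn.1 (by omega)
    have : ∀ l ∈ Finset.range N,
        Real.sin ((n:ℝ)*l*Real.pi/N)^2 = 1/2 - Real.cos (2*Real.pi*(n:ℝ)*l/N)/2 := by
      intro l _
      rw [Real.sin_sq_eq_half_sub]
      congr 2
      ring
    rw [Finset.sum_congr rfl this, Finset.sum_sub_distrib, Finset.sum_const]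
    have : ∑ l ∈ Finset.range N, Real.cos (2*Real.pi*(n:ℝ)*l/N)/2
        = (∑ l ∈ Finset.range N, Real.cos (2*Real.pi*(n:ℝ)*l/N))/2 := by
      rw [Finset.sum_div]
    rw [this, hc]
    simp
    ring
  -- double counting
  have swap : ∑ l ∈ Finset.range N, ∑ n ∈ Finset.Icc 1 (N-1),
      Real.sin (n*l*Real.pi/N)^2 / Real.sin (n*Real.pi/N)^2
      = (N/2) * ∑ n ∈ Finset.Icc 1 (N-1), 1 / Real.sin (n*Real.pi/N)^2 := by
    rw [Finset.sum_comm, Finset.mul_sum]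
    apply Finset.sum_congr rfl
    intro n hn
    rw [← Finset.sum_div, inner n hn]
    field_simp
  have lhs : ∑ l ∈ Finset.range N, ∑ n ∈ Finset.Icc 1 (N-1),
      Real.sin (n*l*Real.pi/N)^2 / Real.sin (n*Real.pi/N)^2
      = N*((N:ℝ)^2-1)/6 := by
    have : ∀ l ∈ Finset.range N, ∑ n ∈ Finset.Icc 1 (N-1),
        Real.sin (n*l*Real.pi/N)^2 / Real.sin (n*Real.pi/N)^2 = l * ((N:ℝ) - l) := by
      intro l hl
      exact T2_eq N hN l (le_of_lt (Finset.mem_range.mp hl))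
    rw [Finset.sum_congr rfl this]
    have expand : ∀ l ∈ Finset.range N, (l:ℝ) * ((N:ℝ) - l) = (N:ℝ)*(l:ℝ) - (l:ℝ)^2 := by
      intro l _; ring
    rw [Finset.sum_congr rfl expand, Finset.sum_sub_distrib, ← Finset.mul_sum,
      sum_id_real, sum_sq_real]
    ring
  rw [swap] at lhs
  have h2 : (N:ℝ)/2 ≠ 0 := by positivity
  field_simp at lhs
  rw [eq_div_iff (by norm_num : (3:ℝ) ≠ 0)]
  linarith [lhs]

theorem chiral_potts_T4 (N l : ℕ) (hN : 1 ≤ N) (hl : l ≤ N) :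
    ∑ n ∈ Finset.Icc 1 (N - 1),
      (Real.sin (n * l * Real.pi / N)) ^ 2 / (Real.sin (n * Real.pi / N)) ^ 4
    = ((l : ℝ) ^ 2 * ((N : ℝ) - l) ^ 2 + 2 * l * ((N : ℝ) - l)) / 3 := by
  revert hl
  induction l using Nat.twoStepInduction with
  | zero => intro _; simp
  | one =>
    intro _
    have key : ∀ n ∈ Finset.Icc 1 (N-1),
        Real.sin (n*(1:ℕ)*Real.pi/N)^2 / Real.sin (n*Real.pi/N)^4
          = 1 / Real.sin (n*Real.pi/N)^2 := by
      intro n hn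
      have hs := sin_ne N n hn
      rw [Nat.cast_one, mul_one]
      field_simp
    rw [Finset.sum_congr rfl key, C_eq N hN]
    push_cast
    ring
  | more l ih1 ih2 =>
    intro hl
    have key : ∀ n ∈ Finset.Icc 1 (N-1),
        Real.sin (n*(l+2:ℕ)*Real.pi/N)^2 / Real.sin (n*Real.pi/N)^4
          = 2 * (Real.sin (n*(l+1:ℕ)*Real.pi/N)^2 / Real.sin (n*Real.pi/N)^4)
            - Real.sin (n*(l:ℕ)*Real.pi/N)^2 / Real.sin (n*Real.pi/N)^4
            + (2 * (1 / Real.sin (n*Real.pi/N)^2)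
              - 4 * (Real.sin (n*(l+1:ℕ)*Real.pi/N)^2 / Real.sin (n*Real.pi/N)^2)) := by
      intro n hn
      have hs := sin_ne N n hn
      set a : ℝ := (n:ℝ)*Real.pi/N with ha
      have ht := trig_key ((l:ℝ)+1) a
      rw [show ((l:ℝ)+1-1) = (l:ℝ) by ring] at ht
      have hc : Real.cos (2*(((l:ℝ)+1)*a)) = 1 - 2*Real.sin (((l:ℝ)+1)*a)^2 := by
        rw [Real.cos_two_mul]
        nlinarith [Real.sin_sq_add_cos_sq (((l:ℝ)+1)*a)]
      rw [hc] at ht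
      have e1 : (n:ℝ)*((l+2:ℕ):ℝ)*Real.pi/N = (((l:ℝ)+1)+1)*a := by
        rw [ha]; push_cast; ring
      have e2 : (n:ℝ)*((l+1:ℕ):ℝ)*Real.pi/N = ((l:ℝ)+1)*a := by
        rw [ha]; push_cast; ring
      have e3 : (n:ℝ)*((l:ℕ):ℝ)*Real.pi/N = (l:ℝ)*a := by
        rw [ha]; push_cast; ring
      rw [e1, e2, e3]
      field_simp
      linear_combination ht
    rw [Finset.sum_congr rfl key]
    simp only [Finset.sum_add_distrib, Finset.sum_sub_distrib, ← Finset.mul_sum]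
    rw [ih1 (by omega), ih2 (by omega), C_eq N hN, T2_eq N hN (l+1) (by omega)]
    push_cast
    ring
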